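/- For all a, b, R > 0, the function F(a,b) = b/48 + (a+1)³√R/(64 b √(2ab)) satisfies F(a,b) ≥ 2^{-21/5} R^{1/5}, with equality at a = 1/5 and b = (9/5)(R/2)^{1/5}. -/
import Mathlib

private lemma aux_poly (a : ℝ) (ha : 0 < a) : 46656 * a ≤ 3125 * (a + 1) ^ 6 := by
  nlinarith [mul_nonneg (sq_nonneg (5*a-1)) (pow_pos ha 4).le,
    mul_nonneg (sq_nonneg (5*a-1)) (pow_pos ha 3).le,
    mul_nonneg (sq_nonneg (5*a-1)) (sq_nonneg a),
    mul_nonneg (sq_nonneg (5*a-1)) ha.le, sq_nonneg (5*a-1)]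

private lemma aux_key (R : ℝ) (hR : 0 < R) :
    (R / 6553600000) ^ ((1:ℝ)/5) = (2:ℝ) ^ (-(21:ℝ)/5) * R ^ ((1:ℝ)/5) / 5 := by
  have h1 : (6553600000:ℝ) = 2 ^ (21:ℕ) * 5 ^ (5:ℕ) := by norm_num
  rw [Real.div_rpow hR.le (by norm_num), h1,
    Real.mul_rpow (by positivity) (by positivity),
    ← Real.rpow_natCast (2:ℝ) 21, ← Real.rpow_natCast (5:ℝ) 5,
    ← Real.rpow_mul (by norm_num), ← Real.rpow_mul (by norm_num)]
  push_cast
  rw [show (21:ℝ) * (1/5) = 21/5 by norm_num, show (5:ℝ) * (1/5) = 1 by norm_num,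
    Real.rpow_one, show (-(21:ℝ)/5) = -((21:ℝ)/5) by ring,
    Real.rpow_neg (by norm_num)]
  have h2 : (0:ℝ) < (2:ℝ) ^ ((21:ℝ)/5) := Real.rpow_pos_of_pos two_pos _
  field_simp

/-- Optimization step for the explicit analytic bound: for all `a, b, R > 0`,
`F(a,b) = b/48 + (a+1)³√R/(64 b √(2ab)) ≥ 2^{-21/5} R^{1/5}`, with equality at
`a = 1/5`, `b = (9/5)(R/2)^{1/5}`. -/
theorem analytic_bound_optimization (R : ℝ) (hR : 0 < R) :
    (∀ a b : ℝ, 0 < a → 0 < b →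
      (2:ℝ) ^ (-(21:ℝ)/5) * R ^ ((1:ℝ)/5) ≤
        b / 48 + (a + 1) ^ 3 * Real.sqrt R / (64 * b * Real.sqrt (2 * a * b))) ∧
    ((1/5 : ℝ) + 1) ^ 3 * Real.sqrt R /
        (64 * ((9/5) * (R/2) ^ ((1:ℝ)/5)) *
          Real.sqrt (2 * (1/5) * ((9/5) * (R/2) ^ ((1:ℝ)/5)))) +
      ((9/5) * (R/2) ^ ((1:ℝ)/5)) / 48
        = (2:ℝ) ^ (-(21:ℝ)/5) * R ^ ((1:ℝ)/5) := by
  constructor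
  · intro a b ha hb
    set s := Real.sqrt (2 * a * b) with hs_def
    have hs : 0 < s := Real.sqrt_pos.mpr (by positivity)
    have hs2 : s ^ 2 = 2 * a * b := Real.sq_sqrt (by positivity)
    have hsqR : 0 < Real.sqrt R := Real.sqrt_pos.mpr hR
    have hsR : Real.sqrt R ^ 2 = R := Real.sq_sqrt hR.le
    set T := (a + 1) ^ 3 * Real.sqrt R / (64 * b * s) with hT_def
    have hT : 0 < T := by positivity
    set x := b / 144 with hx_def
    set y := T / 2 with hy_def
    have hx : 0 < x := by positivity
    have hy : 0 < y := by positivity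
    -- compute y^2
    have hy2 : y ^ 2 = (a + 1) ^ 6 * R / (32768 * a * b ^ 3) := by
      rw [hy_def, hT_def, div_pow, div_pow]
      have e1 : ((a + 1) ^ 3 * Real.sqrt R) ^ 2 = (a + 1) ^ 6 * R := by
        linear_combination ((a + 1) ^ 3) ^ 2 * hsR
      have e2 : (64 * b * s) ^ 2 = 4096 * b ^ 2 * (2 * a * b) := by
        linear_combination 4096 * b ^ 2 * hs2
      rw [e1, e2]
      field_simp
      ring
    have hxy : x ^ 3 * y ^ 2 = (a + 1) ^ 6 * R / (97844723712 * a) := by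
      rw [hx_def, hy2]
      field_simp
      ring
    have hkey : R / 6553600000 ≤ x ^ 3 * y ^ 2 := by
      rw [hxy, div_le_div_iff₀ (by norm_num) (by positivity)]
      nlinarith [mul_le_mul_of_nonneg_left (aux_poly a ha) hR.le]
    -- AM-GM
    have amgm := Real.geom_mean_le_arith_mean2_weighted
      (by norm_num : (0:ℝ) ≤ 3/5) (by norm_num : (0:ℝ) ≤ 2/5)
      (by positivity : (0:ℝ) ≤ 5 * x) (by positivity : (0:ℝ) ≤ 5 * y)
      (by norm_num : (3:ℝ)/5 + 2/5 = 1)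
    have hlhs : (5 * x) ^ ((3:ℝ)/5) * (5 * y) ^ ((2:ℝ)/5)
        = 5 * (x ^ 3 * y ^ 2) ^ ((1:ℝ)/5) := by
      rw [Real.mul_rpow (by norm_num) hx.le, Real.mul_rpow (by norm_num) hy.le,
        Real.mul_rpow (by positivity) (by positivity)]
      have e1 : x ^ ((3:ℝ)/5) = (x ^ 3) ^ ((1:ℝ)/5) := by
        rw [← Real.rpow_natCast x 3, ← Real.rpow_mul hx.le]; norm_num
      have e2 : y ^ ((2:ℝ)/5) = (y ^ 2) ^ ((1:ℝ)/5) := by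
        rw [← Real.rpow_natCast y 2, ← Real.rpow_mul hy.le]; norm_num
      have e3 : (5:ℝ) ^ ((3:ℝ)/5) * (5:ℝ) ^ ((2:ℝ)/5) = 5 := by
        rw [← Real.rpow_add (by norm_num)]; norm_num
      rw [e1, e2]
      calc (5:ℝ) ^ ((3:ℝ)/5) * (x ^ 3) ^ ((1:ℝ)/5) * ((5:ℝ) ^ ((2:ℝ)/5) * (y ^ 2) ^ ((1:ℝ)/5))
          = ((5:ℝ) ^ ((3:ℝ)/5) * (5:ℝ) ^ ((2:ℝ)/5)) *
            ((x ^ 3) ^ ((1:ℝ)/5) * (y ^ 2) ^ ((1:ℝ)/5)) := by ring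
        _ = 5 * ((x ^ 3) ^ ((1:ℝ)/5) * (y ^ 2) ^ ((1:ℝ)/5)) := by rw [e3]
    have hmono : (R / 6553600000) ^ ((1:ℝ)/5) ≤ (x ^ 3 * y ^ 2) ^ ((1:ℝ)/5) :=
      Real.rpow_le_rpow (by positivity) hkey (by norm_num)
    have hsum : b / 48 + T = 3/5 * (5 * x) + 2/5 * (5 * y) := by
      rw [hx_def, hy_def]; ring
    calc (2:ℝ) ^ (-(21:ℝ)/5) * R ^ ((1:ℝ)/5)
        = 5 * ((R / 6553600000) ^ ((1:ℝ)/5)) := by rw [aux_key R hR]; ring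
      _ ≤ 5 * ((x ^ 3 * y ^ 2) ^ ((1:ℝ)/5)) := by linarith
      _ = (5 * x) ^ ((3:ℝ)/5) * (5 * y) ^ ((2:ℝ)/5) := hlhs.symm
      _ ≤ 3/5 * (5 * x) + 2/5 * (5 * y) := amgm
      _ = b / 48 + T := hsum.symm
  · set u := (R/2) ^ ((1:ℝ)/5) with hu_def
    have hu : 0 < u := Real.rpow_pos_of_pos (by positivity) _
    have hu5 : u ^ 5 = R / 2 := by
      rw [hu_def, ← Real.rpow_natCast ((R/2) ^ ((1:ℝ)/5)) 5,
        ← Real.rpow_mul (by positivity)]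
      norm_num
    have hRu : R = 2 * u ^ 5 := by linarith
    have hsR : Real.sqrt R = u ^ 2 * Real.sqrt (2 * u) := by
      rw [hRu, show (2:ℝ) * u ^ 5 = (u ^ 2) ^ 2 * (2 * u) by ring,
        Real.sqrt_mul (sq_nonneg _), Real.sqrt_sq (by positivity)]
    have hsb : Real.sqrt (2 * (1/5) * ((9/5) * u)) = (3/5) * Real.sqrt (2 * u) := by
      rw [show (2:ℝ) * (1/5) * ((9/5) * u) = (3/5) ^ 2 * (2 * u) by ring,
        Real.sqrt_mul (by positivity), Real.sqrt_sq (by positivity)]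
    have hs2u : 0 < Real.sqrt (2 * u) := Real.sqrt_pos.mpr (by positivity)
    have hR5 : R ^ ((1:ℝ)/5) = 2 ^ ((1:ℝ)/5) * u := by
      rw [show R ^ ((1:ℝ)/5) = (2 * u ^ 5) ^ ((1:ℝ)/5) by rw [← hRu],
        Real.mul_rpow (by norm_num) (by positivity),
        ← Real.rpow_natCast u 5, ← Real.rpow_mul hu.le]
      norm_num
    have hrhs : (2:ℝ) ^ (-(21:ℝ)/5) * R ^ ((1:ℝ)/5) = u / 16 := by
      rw [hR5, ← mul_assoc, ← Real.rpow_add (by norm_num),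
        show -(21:ℝ)/5 + 1/5 = ((-4:ℤ):ℝ) by norm_num, Real.rpow_intCast]
      norm_num
      ring
    rw [hsR, hsb, hrhs]
    field_simp
    ring
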